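/- For any even integer t ≥ 6 and any integer β ≥ 10, the polynomial Q_t(x) is not divisible in ℚ[x] by any polynomial V(x) ∈ ℚ[x] that has at least two nonzero terms and such that every exponent occurring with nonzero coefficient in V is divisible by β. -/

import Mathlib

open Polynomial

/-- `Q_t(x) = 2x^{2t+1} − 2x^{2t−1} + 2x^{2t−2} + x^{t+3} − x^{t+2} + x^{t−1} − x^{t−2}
− 2x^3 + 2x^2 − 2`. -/
noncomputable def Qpoly (t : ℕ) : Polynomial ℚ :=
  C 2 * X ^ (2 * t + 1) - C 2 * X ^ (2 * t - 1) + C 2 * X ^ (2 * t - 2) + X ^ (t + 3)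
    - X ^ (t + 2) + X ^ (t - 1) - X ^ (t - 2) - C 2 * X ^ 3 + C 2 * X ^ 2 - C 2

lemma coeff_comp_C_mul_X {K : Type*} [CommRing K] (P : K[X]) (a : K) (n : ℕ) :
    (P.comp (C a * X)).coeff n = a ^ n * P.coeff n := by
  induction P using Polynomial.induction_on' with
  | add p q hp hq => rw [add_comp, coeff_add, hp, hq, coeff_add, mul_add]
  | monomial k c =>
      have h1 : ((C c * X ^ k : K[X])).comp (C a * X) = C (c * a ^ k) * X ^ k := by
        rw [mul_comp, C_comp, pow_comp, X_comp, mul_pow, ← C_pow, ← mul_assoc, ← C_mul]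
      rw [← C_mul_X_pow_eq_monomial, h1]
      simp only [coeff_C_mul, coeff_X_pow]
      by_cases h : n = k
      · subst h; simp; ring
      · simp [h]

lemma support_card_le_one_of_dvd_X_pow {K : Type*} [Field K] {V : K[X]} (hV0 : V ≠ 0) {e : ℕ}
    (h : V ∣ X ^ e) : V.support.card ≤ 1 := by
  obtain ⟨W, hW⟩ := h
  have hW0 : W ≠ 0 := by
    rintro rfl; rw [mul_zero] at hW; exact (pow_ne_zero e X_ne_zero) hW
  have h1 : V.natDegree + W.natDegree = e := by
    have := natDegree_mul hV0 hW0
    rw [← hW, natDegree_X_pow] at this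
    omega
  have h2 : V.natTrailingDegree + W.natTrailingDegree = e := by
    have := natTrailingDegree_mul hV0 hW0
    rw [← hW, natTrailingDegree_X_pow] at this
    omega
  have h3 := V.natTrailingDegree_le_natDegree
  have h4 := W.natTrailingDegree_le_natDegree
  have h5 : V.support ⊆ {V.natDegree} := by
    intro k hk
    have h6 := le_natDegree_of_mem_supp k hk
    have h7 := natTrailingDegree_le_of_mem_supp k hk
    simp only [Finset.mem_singleton]
    omega
  exact le_trans (Finset.card_le_card h5) (by simp)

lemma sum_pow_eq_zero {K : Type*} [Field K] {z : K} {β : ℕ} (h1 : z ^ β = 1) (h2 : z ≠ 1) :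
    ∑ j ∈ Finset.range β, z ^ j = 0 := by
  have h3 : (∑ j ∈ Finset.range β, z ^ j) * (z - 1) = 0 := by
    rw [geom_sum_mul, h1, sub_self]
  exact (mul_eq_zero.mp h3).resolve_right (sub_ne_zero.2 h2)

lemma dvd_section {K : Type*} [Field K] {β : ℕ} (hβ0 : 0 < β) {ζ : K}
    (hζ1 : ζ ^ β = 1) (hζd : ∀ m : ℕ, ζ ^ m = 1 → β ∣ m)
    {V Q : K[X]} (hdvd : V ∣ Q) (hexp : ∀ k ∈ V.support, β ∣ k)
    {e : ℕ} (huniq : ∀ n : ℕ, Q.coeff n ≠ 0 → (β : ℤ) ∣ (n : ℤ) - (e : ℤ) → n = e) :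
    V ∣ C ((β : K) * Q.coeff e) * X ^ e := by
  obtain ⟨W, hQ⟩ := hdvd
  obtain ⟨s, hse⟩ : ∃ s : ℕ, β ∣ e + s :=
    ⟨β * e - e, ⟨e, Nat.add_sub_cancel' (Nat.le_mul_of_pos_left e hβ0)⟩⟩
  have hVcomp : ∀ j : ℕ, V.comp (C (ζ ^ j) * X) = V := by
    intro j
    ext n
    rw [coeff_comp_C_mul_X]
    by_cases hn : V.coeff n = 0
    · rw [hn, mul_zero]
    · obtain ⟨d, rfl⟩ := hexp n (mem_support_iff.mpr hn)
      rw [← pow_mul, show j * (β * d) = β * (j * d) by ring, pow_mul, hζ1, one_pow, one_mul]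
  set M : K[X] := ∑ j ∈ Finset.range β, C (ζ ^ (j * s)) * (Q.comp (C (ζ ^ j) * X)) with hM
  have hVdvdM : V ∣ M := by
    refine Finset.dvd_sum fun j _ => ?_
    refine Dvd.dvd.mul_left ?_ _
    rw [hQ, mul_comp, hVcomp j]
    exact dvd_mul_right V _
  have hterm : ∀ n j : ℕ, ζ ^ (j * s) * (ζ ^ j) ^ n * Q.coeff n
      = (ζ ^ (s + n)) ^ j * Q.coeff n := by
    intro n j
    rw [← pow_mul, ← pow_add, ← pow_mul, show j * s + j * n = (s + n) * j by ring]
  have hMeq : M = C ((β : K) * Q.coeff e) * X ^ e := by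
    ext n
    rw [hM, finset_sum_coeff]
    simp only [coeff_C_mul, coeff_comp_C_mul_X, coeff_X_pow, ← mul_assoc]
    rw [Finset.sum_congr rfl fun j _ => hterm n j, ← Finset.sum_mul]
    by_cases hn : β ∣ n + s
    · have hz : ζ ^ (s + n) = 1 := by
        obtain ⟨d, hd⟩ := hn
        rw [Nat.add_comm s n, hd, pow_mul, hζ1, one_pow]
      rw [hz]
      simp only [one_pow, Finset.sum_const, Finset.card_range, nsmul_eq_mul, mul_one]
      by_cases hne : n = e
      · subst hne; rw [if_pos rfl, mul_one]
      · have hdint : (β : ℤ) ∣ (n : ℤ) - (e : ℤ) := by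
          have hx1 : (β : ℤ) ∣ ((n + s : ℕ) : ℤ) := Int.natCast_dvd_natCast.mpr hn
          have hx2 : (β : ℤ) ∣ ((e + s : ℕ) : ℤ) := Int.natCast_dvd_natCast.mpr hse
          have hx3 := dvd_sub hx1 hx2
          push_cast at hx3
          rwa [show (n : ℤ) + s - ((e : ℤ) + s) = (n : ℤ) - e by ring] at hx3
        have h0 : Q.coeff n = 0 := by
          by_contra hq
          exact hne (huniq n hq hdint)
        rw [h0, if_neg hne, mul_zero, mul_zero]
    · have hz : ζ ^ (s + n) ≠ 1 := by
        intro h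
        apply hn
        have := hζd (s + n) h
        rwa [Nat.add_comm s n] at this
      have hzβ : (ζ ^ (s + n)) ^ β = 1 := by
        rw [← pow_mul, mul_comm, pow_mul, hζ1, one_pow]
      have hne : n ≠ e := by rintro rfl; exact hn hse
      rw [sum_pow_eq_zero hzβ hz, zero_mul, if_neg hne, mul_zero]
  exact hMeq ▸ hVdvdM

/-- For even `t ≥ 6` and `β ≥ 10`, `Q_t` is not divisible by any rational polynomial with at
least two nonzero terms all of whose exponents are divisible by `β`. -/
theorem Qpoly_not_dvd_by_beta_lacunary (t : ℕ) (ht : 6 ≤ t) (hte : Even t) (β : ℕ)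
    (hβ : 10 ≤ β) (V : Polynomial ℚ) (hV : 2 ≤ V.support.card)
    (hexp : ∀ k ∈ V.support, β ∣ k) :
    ¬ V ∣ Qpoly t := by
  intro hdvd
  have hβ0 : 0 < β := by omega
  have hsmall : ∀ d : ℤ, (β : ℤ) ∣ d → d.natAbs ≤ 9 → d = 0 := by
    intro d hd hle
    refine Int.eq_zero_of_dvd_of_natAbs_lt_natAbs hd ?_
    simp only [Int.natAbs_natCast]
    omega
  have hsuppZ : ∀ n : ℕ, (Qpoly t).coeff n ≠ 0 →
      (n : ℤ) = 0 ∨ (n : ℤ) = 2 ∨ (n : ℤ) = 3 ∨ (n : ℤ) = (t : ℤ) - 2 ∨ (n : ℤ) = (t : ℤ) - 1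
        ∨ (n : ℤ) = (t : ℤ) + 2 ∨ (n : ℤ) = (t : ℤ) + 3 ∨ (n : ℤ) = 2 * (t : ℤ) - 2
        ∨ (n : ℤ) = 2 * (t : ℤ) - 1 ∨ (n : ℤ) = 2 * (t : ℤ) + 1 := by
    intro n h
    by_contra hc
    push_neg at hc
    obtain ⟨h1, h2, h3, h4, h5, h6, h7, h8, h9, h10⟩ := hc
    apply h
    have e1 : n ≠ 2 * t + 1 := by omega
    have e2 : n ≠ 2 * t - 1 := by omega
    have e3 : n ≠ 2 * t - 2 := by omega
    have e4 : n ≠ t + 3 := by omega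
    have e5 : n ≠ t + 2 := by omega
    have e6 : n ≠ t - 1 := by omega
    have e7 : n ≠ t - 2 := by omega
    have e8 : n ≠ 3 := by omega
    have e9 : n ≠ 2 := by omega
    have e10 : n ≠ 0 := by omega
    simp [Qpoly, coeff_X_pow, coeff_C, e1, e2, e3, e4, e5, e6, e7, e8, e9, e10]
  have hc0 : (Qpoly t).coeff 0 = -2 := by
    have e1 : (0 : ℕ) ≠ 2 * t + 1 := by omega
    have e2 : (0 : ℕ) ≠ 2 * t - 1 := by omega
    have e3 : (0 : ℕ) ≠ 2 * t - 2 := by omega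
    have e4 : (0 : ℕ) ≠ t + 3 := by omega
    have e5 : (0 : ℕ) ≠ t + 2 := by omega
    have e6 : (0 : ℕ) ≠ t - 1 := by omega
    have e7 : (0 : ℕ) ≠ t - 2 := by omega
    simp [Qpoly, coeff_X_pow, coeff_C, e1, e2, e3, e4, e5, e6, e7]
  have hc2 : (Qpoly t).coeff 2 = 2 := by
    have e1 : (2 : ℕ) ≠ 2 * t + 1 := by omega
    have e2 : (2 : ℕ) ≠ 2 * t - 1 := by omega
    have e3 : (2 : ℕ) ≠ 2 * t - 2 := by omega
    have e4 : (2 : ℕ) ≠ t + 3 := by omega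
    have e5 : (2 : ℕ) ≠ t + 2 := by omega
    have e6 : (2 : ℕ) ≠ t - 1 := by omega
    have e7 : (2 : ℕ) ≠ t - 2 := by omega
    simp [Qpoly, coeff_X_pow, coeff_C, e1, e2, e3, e4, e5, e6, e7] <;> omega
  have hct1 : (Qpoly t).coeff (t - 1) = 1 := by
    have e1 : t - 1 ≠ 2 * t + 1 := by omega
    have e2 : t - 1 ≠ 2 * t - 1 := by omega
    have e3 : t - 1 ≠ 2 * t - 2 := by omega
    have e4 : t - 1 ≠ t + 3 := by omega
    have e5 : t - 1 ≠ t + 2 := by omega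
    have e7 : t - 1 ≠ t - 2 := by omega
    have e8 : t - 1 ≠ 3 := by omega
    have e9 : t - 1 ≠ 2 := by omega
    have e10 : t - 1 ≠ 0 := by omega
    simp [Qpoly, coeff_X_pow, coeff_C, e1, e2, e3, e4, e5, e7, e8, e9, e10]
  -- the main engine: a uniquely-represented residue class gives a contradiction
  have main : ∀ e : ℕ, (Qpoly t).coeff e ≠ 0 →
      (∀ n : ℕ, (Qpoly t).coeff n ≠ 0 → (β : ℤ) ∣ (n : ℤ) - (e : ℤ) → n = e) → False := by
    intro e hce huniq
    have hζ := Complex.isPrimitiveRoot_exp β (by omega)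
    set f : ℚ →+* ℂ := (algebraMap ℚ ℂ) with hf
    have hinj : Function.Injective f := f.injective
    have hsuppm : (V.map f).support = V.support := support_map_of_injective V hinj
    have hVm0 : V.map f ≠ 0 := by
      rw [Ne, Polynomial.map_eq_zero_iff hinj]
      intro h0
      rw [h0] at hV
      simp at hV
    have hdvdm : V.map f ∣ (Qpoly t).map f := Polynomial.map_dvd f hdvd
    have hexp' : ∀ k ∈ (V.map f).support, β ∣ k := fun k hk => hexp k (by rwa [hsuppm] at hk)
    have huniq' : ∀ n : ℕ, ((Qpoly t).map f).coeff n ≠ 0 → (β : ℤ) ∣ (n : ℤ) - (e : ℤ) →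
        n = e := by
      intro n hn hdd
      refine huniq n (fun h0 => hn ?_) hdd
      rw [coeff_map, h0, map_zero]
    have hsec := dvd_section hβ0 hζ.pow_eq_one (fun m hm => (hζ.pow_eq_one_iff_dvd m).mp hm)
      hdvdm hexp' huniq'
    set c : ℂ := (β : ℂ) * ((Qpoly t).map f).coeff e with hcdef
    have hcne : c ≠ 0 := by
      refine mul_ne_zero (Nat.cast_ne_zero.mpr (by omega)) ?_
      rw [coeff_map]
      intro h
      exact hce (hinj (by rw [h, map_zero]))
    obtain ⟨W, hW⟩ := hsec
    have hXdvd : V.map f ∣ X ^ e := by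
      refine ⟨C c⁻¹ * W, ?_⟩
      have h1 : C c⁻¹ * (C c * X ^ e) = X ^ e := by
        rw [← mul_assoc, ← C_mul, inv_mul_cancel₀ hcne, C_1, one_mul]
      rw [← h1, hW]
      ring
    have hcard := support_card_le_one_of_dvd_X_pow hVm0 hXdvd
    rw [hsuppm] at hcard
    omega
  by_cases hA : (β : ℤ) ∣ (t : ℤ) ∨ (β : ℤ) ∣ (t : ℤ) - 3 ∨ (β : ℤ) ∣ (t : ℤ) - 4
  · obtain ⟨c, hc, hcd⟩ : ∃ c : ℤ, (c = 0 ∨ c = 3 ∨ c = 4) ∧ (β : ℤ) ∣ (t : ℤ) - c := by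
      rcases hA with h | h | h
      exacts [⟨0, Or.inl rfl, by simpa using h⟩, ⟨3, Or.inr (Or.inl rfl), h⟩,
        ⟨4, Or.inr (Or.inr rfl), h⟩]
    refine main 0 (by rw [hc0]; norm_num) ?_
    intro n hn hd
    rw [Nat.cast_zero, sub_zero] at hd
    rcases hsuppZ n hn with h | h | h | h | h | h | h | h | h | h <;>
    first
      | omega
      | (exfalso
         have hcomb := hsmall _ (h ▸ hd) (by omega)
         omega)
      | (exfalso
         have hcomb := hsmall _ (dvd_sub (h ▸ hd) hcd) (by omega)
         omega)
      | (exfalso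
         have hcomb := hsmall _ (dvd_sub (h ▸ hd) (hcd.mul_left 2)) (by omega)
         omega)
  · by_cases hB : (β : ℤ) ∣ (t : ℤ) - 1 ∨ (β : ℤ) ∣ (t : ℤ) + 2
    · obtain ⟨c, hc, hcd⟩ : ∃ c : ℤ, (c = 1 ∨ c = -2) ∧ (β : ℤ) ∣ (t : ℤ) - c := by
        rcases hB with h | h
        · exact ⟨1, Or.inl rfl, h⟩
        · exact ⟨-2, Or.inr rfl, by rwa [show (t : ℤ) - (-2) = (t : ℤ) + 2 by ring]⟩
      refine main 2 (by rw [hc2]; norm_num) ?_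
      intro n hn hd
      rcases hsuppZ n hn with h | h | h | h | h | h | h | h | h | h <;>
      first
        | omega
        | (exfalso
           have hcomb := hsmall _ (h ▸ hd) (by omega)
           omega)
        | (exfalso
           have hcomb := hsmall _ (dvd_sub (h ▸ hd) hcd) (by omega)
           omega)
        | (exfalso
           have hcomb := hsmall _ (dvd_sub (h ▸ hd) (hcd.mul_left 2)) (by omega)
           omega)
    · push_neg at hA hB
      obtain ⟨hA1, hA2, hA3⟩ := hA
      obtain ⟨hB1, hB2⟩ := hB
      refine main (t - 1) (by rw [hct1]; norm_num) ?_
      intro n hn hd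
      rw [Nat.cast_sub (by omega : 1 ≤ t), Nat.cast_one] at hd
      rcases hsuppZ n hn with h | h | h | h | h | h | h | h | h | h
      · exfalso
        apply hB1
        rw [show (t : ℤ) - 1 = -((0 : ℤ) - ((t : ℤ) - 1)) by ring]
        exact dvd_neg.mpr (h ▸ hd)
      · exfalso
        apply hA2
        rw [show (t : ℤ) - 3 = -((2 : ℤ) - ((t : ℤ) - 1)) by ring]
        exact dvd_neg.mpr (h ▸ hd)
      · exfalso
        apply hA3
        rw [show (t : ℤ) - 4 = -((3 : ℤ) - ((t : ℤ) - 1)) by ring]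
        exact dvd_neg.mpr (h ▸ hd)
      · exfalso
        have hcomb := hsmall _ (h ▸ hd) (by omega)
        omega
      · omega
      · exfalso
        have hcomb := hsmall _ (h ▸ hd) (by omega)
        omega
      · exfalso
        have hcomb := hsmall _ (h ▸ hd) (by omega)
        omega
      · exfalso
        apply hB1
        rw [show (t : ℤ) - 1 = 2 * (t : ℤ) - 2 - ((t : ℤ) - 1) by ring]
        exact h ▸ hd
      · exfalso
        apply hA1
        rw [show (t : ℤ) = 2 * (t : ℤ) - 1 - ((t : ℤ) - 1) by ring]
        exact h ▸ hd
      · exfalso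
        apply hB2
        rw [show (t : ℤ) + 2 = 2 * (t : ℤ) + 1 - ((t : ℤ) - 1) by ring]
        exact h ▸ hd
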